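/- In the abstract bundle semantics, for every (B, who) ∈ ⟦C⟧ and every role ρ, the sequence of directed terms along the strand who(ρ) in B is exactly the projection of the corresponding maximal trace of C onto ρ: a transmission +op⟨M̃⟩ for each interaction in the trace with sender ρ, a reception −op⟨M̃⟩ for each interaction with receiver ρ, in trace order, followed by the terminal event e^ρ. -/

import Mathlib

/-- Choreography mini-language: `C ::= Σᵢ ρ1 → ρ2 : opᵢ⟨M̃ᵢ⟩. Cᵢ | 0`.
A `comm ρ1 ρ2 bs` is a finite nondeterministic sum of interactions from role
`ρ1` to role `ρ2`, each branch carrying an operation label, a message tuple,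
and a continuation. -/
inductive Chor (R O M : Type) : Type where
  | zero : Chor R O M
  | comm : R → R → List (O × List M × Chor R O M) → Chor R O M

/-- Interaction labels `μ = (ρ1, ρ2, op, M̃)`. -/
abbrev CLabel (R O M : Type) := R × R × O × List M

/-- LTS rule C-Com: a branch is selected nondeterministically. -/
inductive CStep {R O M : Type} : Chor R O M → CLabel R O M → Chor R O M → Prop where
  | comm {ρ1 ρ2 : R} {bs : List (O × List M × Chor R O M)} {op : O}
      {ms : List M} {c : Chor R O M} (h : (op, ms, c) ∈ bs) :
      CStep (Chor.comm ρ1 ρ2 bs) (ρ1, ρ2, op, ms) c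

/-- Maximal LTS traces: sequences of transitions ending at `0`. -/
inductive MaxTrace {R O M : Type} : Chor R O M → List (CLabel R O M) → Prop where
  | nil : MaxTrace Chor.zero []
  | cons {C C' : Chor R O M} {μ : CLabel R O M} {tr : List (CLabel R O M)} :
      CStep C μ C' → MaxTrace C' tr → MaxTrace C (μ :: tr)

/-- Nodes of abstract bundles: `Sum.inl (i, true)` / `Sum.inl (i, false)` are
the transmission / reception nodes of the `i`-th interaction, and `Sum.inr ρ`
is the terminal fresh event `e^ρ` of role `ρ`. -/
abbrev ANode (R : Type) := (ℕ × Bool) ⊕ R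

/-- Abstract messages: an interaction message `op⟨M̃⟩` or a terminal event `e^ρ`. -/
abbrev AMsg (R O M : Type) := (O × List M) ⊕ R

/-- Abstract bundle environments `(B, who)`: a counter `k` of interactions so
far, a node set, strand edges `⇒_B`, transmission edges `→_B`, the message of
each node, and the map `who` giving the first node of each role's strand. -/
structure AEnv (R O M : Type) where
  k : ℕ
  nodes : Set (ANode R)
  edgeS : ANode R → ANode R → Prop
  edgeM : ANode R → ANode R → Prop
  msg : ANode R → Option (AMsg R O M)
  who : R → ANode R

variable {R O M : Type}

/-- The prefixing operation `(B, who)[μ]`: a fresh transmission node is added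
to the front of the sender's strand, a fresh matching reception node to the
front of the receiver's strand, joined by a transmission edge, and `who` is
updated accordingly. -/
def prefixApply [DecidableEq R] (E : AEnv R O M) (μ : CLabel R O M) : AEnv R O M :=
  let n1 : ANode R := Sum.inl (E.k, true)
  let n2 : ANode R := Sum.inl (E.k, false)
  { k := E.k + 1
    nodes := insert n1 (insert n2 E.nodes)
    edgeS := fun a b =>
      E.edgeS a b ∨ (a = n1 ∧ b = E.who μ.1) ∨ (a = n2 ∧ b = E.who μ.2.1)
    edgeM := fun a b => E.edgeM a b ∨ (a = n1 ∧ b = n2)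
    msg := fun n => if n = n1 ∨ n = n2 then some (Sum.inl (μ.2.2.1, μ.2.2.2))
      else E.msg n
    who := fun ρ => if ρ = μ.1 then n1 else if ρ = μ.2.1 then n2 else E.who ρ }

/-- The bundle environment for `0`: one fresh terminal event `e^ρ` per role. -/
def zeroEnv : AEnv R O M where
  k := 0
  nodes := {n | ∃ ρ : R, n = Sum.inr ρ}
  edgeS := fun _ _ => False
  edgeM := fun _ _ => False
  msg := fun n => match n with
    | Sum.inr ρ => some (Sum.inr ρ)
    | Sum.inl _ => none
  who := fun ρ => Sum.inr ρ

mutual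
/-- The abstract bundle semantics `⟦C⟧` (rules ABS-Zero and ABS-Com). -/
def absSem [DecidableEq R] : Chor R O M → Set (AEnv R O M)
  | Chor.zero => {zeroEnv}
  | Chor.comm ρ1 ρ2 bs => absSemList ρ1 ρ2 bs

/-- Semantics of a sum of branches: the union over the branches of the
prefixed bundles of each continuation. -/
def absSemList [DecidableEq R] (ρ1 ρ2 : R) :
    List (O × List M × Chor R O M) → Set (AEnv R O M)
  | [] => ∅
  | (op, ms, c) :: rest =>
      (fun E => prefixApply E (ρ1, ρ2, op, ms)) '' absSem c ∪
        absSemList ρ1 ρ2 rest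
end

/-- Well-formed choreographies: every sum `Σᵢ` ranges over a non-empty set of
branches (as in the grammar, a sum has at least one summand). -/
inductive NoEmptySum {R O M : Type} : Chor R O M → Prop where
  | zero : NoEmptySum Chor.zero
  | comm {ρ1 ρ2 : R} {bs : List (O × List M × Chor R O M)} (hne : bs ≠ [])
      (hrec : ∀ b ∈ bs, NoEmptySum b.2.2) : NoEmptySum (Chor.comm ρ1 ρ2 bs)

/-- Well-formedness: in every interaction the sender and receiver differ. -/
inductive DistinctRoles {R O M : Type} : Chor R O M → Prop where
  | zero : DistinctRoles Chor.zero
  | comm {ρ1 ρ2 : R} {bs : List (O × List M × Chor R O M)} (hne : ρ1 ≠ ρ2)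
      (hrec : ∀ b ∈ bs, DistinctRoles b.2.2) :
      DistinctRoles (Chor.comm ρ1 ρ2 bs)

open Classical

/-- The sequence of nodes obtained by following strand-successor edges,
starting from a given node, for the given number of steps. -/
noncomputable def follow (edgeS : ANode R → ANode R → Prop) :
    ℕ → ANode R → List (ANode R)
  | 0, n => [n]
  | k + 1, n =>
      n :: (if h : ∃ m, edgeS n m then follow edgeS k (Classical.choose h)
            else [])

/-- The directed term of a node: its direction (`true` = transmission) and
its message. -/
def dterm (E : AEnv R O M) (n : ANode R) : Bool × Option (AMsg R O M) :=
  (match n with | Sum.inl (_, b) => b | Sum.inr _ => true, E.msg n)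

/-- The projection of a maximal trace onto a role `ρ`: a transmission
`+op⟨M̃⟩` for each interaction with sender `ρ` and a reception `−op⟨M̃⟩` for
each interaction with receiver `ρ`, in trace order. -/
def projTrace [DecidableEq R] (ρ : R) :
    List (CLabel R O M) → List (Bool × AMsg R O M)
  | [] => []
  | (ρ1, ρ2, op, ms) :: tr =>
      (if ρ = ρ1 then [(true, Sum.inl (op, ms))] else []) ++
      (if ρ = ρ2 then [(false, Sum.inl (op, ms))] else []) ++
      projTrace ρ tr

/-! ### Auxiliary development -/

/-- Build the bundle environment corresponding to a trace. -/
def buildEnv [DecidableEq R] : List (CLabel R O M) → AEnv R O M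
  | [] => zeroEnv
  | μ :: tr => prefixApply (buildEnv tr) μ

lemma absSemList_mem [DecidableEq R] {ρ1 ρ2 : R}
    {bs : List (O × List M × Chor R O M)} {E : AEnv R O M}
    (hE : E ∈ absSemList ρ1 ρ2 bs) :
    ∃ op ms c, (op, ms, c) ∈ bs ∧
      ∃ E', E' ∈ absSem c ∧ E = prefixApply E' (ρ1, ρ2, op, ms) := by
  induction bs with
  | nil => simp [absSemList] at hE
  | cons b rest ih =>
    obtain ⟨op, ms, c⟩ := b
    rcases hE with ⟨E', hE', rfl⟩ | hE
    · exact ⟨op, ms, c, List.mem_cons_self, E', hE', rfl⟩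
    · obtain ⟨op', ms', c', hmem, E', hE', rfl⟩ := ih hE
      exact ⟨op', ms', c', List.mem_cons_of_mem _ hmem, E', hE', rfl⟩

theorem exists_trace [DecidableEq R] (C : Chor R O M) (E : AEnv R O M)
    (hE : E ∈ absSem C) : ∃ tr, MaxTrace C tr ∧ E = buildEnv tr :=
  match C with
  | Chor.zero => ⟨[], MaxTrace.nil, by simpa [absSem, buildEnv] using hE⟩
  | Chor.comm ρ1 ρ2 bs => by
      obtain ⟨op, ms, c, hmem, E', hE', rfl⟩ := absSemList_mem hE
      obtain ⟨tr, htr, rfl⟩ := exists_trace c E' hE'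
      exact ⟨_, MaxTrace.cons (CStep.comm hmem) htr, rfl⟩
termination_by sizeOf C
decreasing_by
  have h1 := List.sizeOf_lt_of_mem hmem
  simp only [Chor.comm.sizeOf_spec, Prod.mk.sizeOf_spec] at *
  omega

lemma trace_distinct : ∀ {C : Chor R O M} {tr}, MaxTrace C tr →
    DistinctRoles C → ∀ μ ∈ tr, μ.1 ≠ μ.2.1 := by
  intro C tr h
  induction h with
  | nil => intro _ μ hμ; cases hμ
  | cons hs _ ih =>
    intro hd μ hμ
    cases hs with | comm hmem =>
    cases hd with | comm hne hrec =>
    rcases List.mem_cons.mp hμ with rfl | hμ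
    · exact hne
    · exact ih (hrec _ hmem) μ hμ

/-- A node is "old" with respect to counter `k`. -/
def nodeOld (k : ℕ) (n : ANode R) : Prop :=
  ∀ (i : ℕ) (bl : Bool), n = Sum.inl (i, bl) → i < k

/-- A list of nodes forming a strand chain with unique successors. -/
inductive Chain (e : ANode R → ANode R → Prop) : List (ANode R) → Prop where
  | single (n : ANode R) : Chain e [n]
  | cons {n m : ANode R} {rest : List (ANode R)} (h : e n m)
      (hu : ∀ b, e n b → b = m) (hc : Chain e (m :: rest)) :
      Chain e (n :: m :: rest)

lemma follow_eq_of_chain {e : ANode R → ANode R → Prop} :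
    ∀ {l : List (ANode R)}, Chain e l → ∀ {n}, l.head? = some n →
      follow e (l.length - 1) n = l := by
  intro l hl
  induction hl with
  | single n0 =>
    intro n hn
    simp at hn
    subst hn
    simp [follow]
  | @cons a m rest h hu hc ih =>
    intro n hn
    rw [List.head?_cons] at hn
    injection hn with hn
    subst hn
    show follow e ((m :: rest).length - 1 + 1) a = a :: m :: rest
    rw [follow]
    have hex : ∃ b, e a b := ⟨m, h⟩
    rw [dif_pos hex]
    have hch : Classical.choose hex = m := hu _ (Classical.choose_spec hex)
    rw [hch, ih rfl]

lemma chain_lift {e e' : ANode R → ANode R → Prop} :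
    ∀ {l : List (ANode R)}, Chain e l →
      (∀ a ∈ l, ∀ b, e' a b ↔ e a b) → Chain e' l := by
  intro l hl
  induction hl with
  | single n => intro _; exact Chain.single n
  | cons h hu _ ih =>
    intro hagr
    refine Chain.cons ?_ ?_ (ih fun a ha => hagr a (List.mem_cons_of_mem _ ha))
    · exact (hagr _ (List.mem_cons_self) _).mpr h
    · intro b hb
      exact hu b ((hagr _ (List.mem_cons_self) _).mp hb)

/-- The nodes along the strand of role `ρ` in `buildEnv tr`. -/
def strandNodes [DecidableEq R] (ρ : R) : List (CLabel R O M) → List (ANode R)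
  | [] => [Sum.inr ρ]
  | μ :: tr =>
      (if ρ = μ.1 then [Sum.inl ((buildEnv (R := R) (O := O) (M := M) tr).k, true)]
       else if ρ = μ.2.1 then [Sum.inl ((buildEnv (R := R) (O := O) (M := M) tr).k, false)]
       else []) ++ strandNodes ρ tr

lemma buildEnv_inv [DecidableEq R] (tr : List (CLabel R O M))
    (hdist : ∀ μ ∈ tr, μ.1 ≠ μ.2.1) :
    (∀ a b, (buildEnv tr).edgeS a b →
        ∃ i bl, a = Sum.inl (i, bl) ∧ i < (buildEnv tr).k) ∧
    (∀ ρ : R, (buildEnv tr).msg (Sum.inr ρ) = some (Sum.inr ρ)) ∧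
    ∀ ρ : R,
      (strandNodes ρ tr).head? = some ((buildEnv tr).who ρ) ∧
      (strandNodes ρ tr).length = (projTrace ρ tr).length + 1 ∧
      (∀ n ∈ strandNodes ρ tr, nodeOld (buildEnv tr).k n) ∧
      Chain (buildEnv tr).edgeS (strandNodes ρ tr) ∧
      (strandNodes ρ tr).map (dterm (buildEnv tr)) =
        (projTrace ρ tr).map (fun p => (p.1, some p.2)) ++
          [(true, some (Sum.inr ρ))] := by
  induction tr with
  | nil =>
    refine ⟨?_, ?_, ?_⟩
    · intro a b h; exact absurd h (by simp [buildEnv, zeroEnv])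
    · intro ρ; simp [buildEnv, zeroEnv]
    · intro ρ
      refine ⟨?_, ?_, ?_, ?_, ?_⟩
      · simp [strandNodes, buildEnv, zeroEnv]
      · simp [strandNodes, projTrace]
      · intro n hn
        simp [strandNodes] at hn
        subst hn
        intro i bl h; cases h
      · exact Chain.single _
      · simp [strandNodes, projTrace, dterm, buildEnv, zeroEnv]
  | cons μ tr ih =>
    obtain ⟨ρ1, ρ2, op, ms⟩ := μ
    have hμd : ρ1 ≠ ρ2 := hdist _ (List.mem_cons_self)
    obtain ⟨ihE, ihM, ihS⟩ := ih (fun μ hμ => hdist μ (List.mem_cons_of_mem _ hμ))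
    set E := buildEnv (R := R) (O := O) (M := M) tr with hEdef
    set k := E.k with hkdef
    set n1 : ANode R := Sum.inl (k, true) with hn1
    set n2 : ANode R := Sum.inl (k, false) with hn2
    have hn12 : n1 ≠ n2 := by simp [hn1, hn2]
    have hbuild : buildEnv (((ρ1, ρ2, op, ms) : CLabel R O M) :: tr) =
        prefixApply E (ρ1, ρ2, op, ms) := rfl
    -- basic facts about prefixApply
    have hk' : (prefixApply E ((ρ1, ρ2, op, ms) : CLabel R O M)).k = k + 1 := rfl
    have hedge : ∀ a b, (prefixApply E ((ρ1, ρ2, op, ms) : CLabel R O M)).edgeS a b ↔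
        E.edgeS a b ∨ (a = n1 ∧ b = E.who ρ1) ∨ (a = n2 ∧ b = E.who ρ2) := by
      intro a b; rfl
    have hmsg : ∀ n, (prefixApply E ((ρ1, ρ2, op, ms) : CLabel R O M)).msg n =
        if n = n1 ∨ n = n2 then some (Sum.inl (op, ms)) else E.msg n := by
      intro n; rfl
    have hwho : ∀ ρ, (prefixApply E ((ρ1, ρ2, op, ms) : CLabel R O M)).who ρ =
        if ρ = ρ1 then n1 else if ρ = ρ2 then n2 else E.who ρ := by
      intro ρ; rfl
    -- old nodes keep their edges and messages
    have hold_ne : ∀ n, nodeOld k n → n ≠ n1 ∧ n ≠ n2 := by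
      intro n hn
      constructor <;> rintro rfl <;> exact absurd (hn _ _ rfl) (lt_irrefl k)
    have hedge_old : ∀ a, nodeOld k a → ∀ b,
        (prefixApply E ((ρ1, ρ2, op, ms) : CLabel R O M)).edgeS a b ↔ E.edgeS a b := by
      intro a ha b
      rw [hedge]
      constructor
      · rintro (h | ⟨rfl, -⟩ | ⟨rfl, -⟩)
        · exact h
        · exact absurd (ha _ _ rfl) (lt_irrefl k)
        · exact absurd (ha _ _ rfl) (lt_irrefl k)
      · exact fun h => Or.inl h
    have hmsg_old : ∀ n, nodeOld k n →
        (prefixApply E ((ρ1, ρ2, op, ms) : CLabel R O M)).msg n = E.msg n := by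
      intro n hn
      obtain ⟨h1, h2⟩ := hold_ne n hn
      rw [hmsg, if_neg (by tauto)]
    have hdterm_old : ∀ n, nodeOld k n →
        dterm (prefixApply E ((ρ1, ρ2, op, ms) : CLabel R O M)) n = dterm E n := by
      intro n hn
      simp [dterm, hmsg_old n hn]
    -- no edges out of the fresh nodes in E
    have hno1 : ∀ b, ¬ E.edgeS n1 b := by
      intro b h
      obtain ⟨i, bl, heq, hlt⟩ := ihE _ _ h
      rw [hn1] at heq
      cases heq
      exact absurd hlt (lt_irrefl _)
    have hno2 : ∀ b, ¬ E.edgeS n2 b := by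
      intro b h
      obtain ⟨i, bl, heq, hlt⟩ := ihE _ _ h
      rw [hn2] at heq
      cases heq
      exact absurd hlt (lt_irrefl _)
    rw [hbuild]
    refine ⟨?_, ?_, ?_⟩
    · -- edge bound
      intro a b h
      rw [hedge] at h
      rcases h with h | ⟨rfl, -⟩ | ⟨rfl, -⟩
      · obtain ⟨i, bl, rfl, hlt⟩ := ihE _ _ h
        exact ⟨i, bl, rfl, by rw [hk']; omega⟩
      · exact ⟨k, true, rfl, by rw [hk']; omega⟩
      · exact ⟨k, false, rfl, by rw [hk']; omega⟩
    · -- terminal messages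
      intro ρ
      rw [hmsg, if_neg (by simp [hn1, hn2])]
      exact ihM ρ
    · intro ρ
      obtain ⟨ihhead, ihlen, ihold, ihchain, ihmap⟩ := ihS ρ
      -- the old strand starts at E.who ρ
      obtain ⟨rest, hrest⟩ : ∃ rest, strandNodes ρ tr = E.who ρ :: rest := by
        cases hsn : strandNodes (R := R) (O := O) (M := M) ρ tr with
        | nil => rw [hsn] at ihhead; simp at ihhead
        | cons a l =>
          rw [hsn] at ihhead
          simp at ihhead
          exact ⟨l, by rw [ihhead]⟩
      have hliftchain : Chain (prefixApply E ((ρ1, ρ2, op, ms) : CLabel R O M)).edgeS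
          (strandNodes ρ tr) :=
        chain_lift ihchain (fun a ha b => hedge_old a (ihold a ha) b)
      have hliftmap : (strandNodes ρ tr).map
          (dterm (prefixApply E ((ρ1, ρ2, op, ms) : CLabel R O M))) =
          (strandNodes ρ tr).map (dterm E) :=
        List.map_congr_left (fun n hn => hdterm_old n (ihold n hn))
      have hstrand : strandNodes ρ (((ρ1, ρ2, op, ms) : CLabel R O M) :: tr) =
          (if ρ = ρ1 then [n1] else if ρ = ρ2 then [n2] else []) ++ strandNodes ρ tr := by
        simp [strandNodes, hn1, hn2, hkdef, hEdef]
      have hproj : projTrace ρ (((ρ1, ρ2, op, ms) : CLabel R O M) :: tr) =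
          (if ρ = ρ1 then [((true : Bool), (Sum.inl (op, ms) : AMsg R O M))] else []) ++
          (if ρ = ρ2 then [((false : Bool), (Sum.inl (op, ms) : AMsg R O M))] else []) ++
          projTrace ρ tr := rfl
      by_cases h1 : ρ = ρ1
      · subst h1
        have h2 : ¬ (ρ = ρ2) := hμd
        rw [hstrand, hproj, if_pos rfl, if_pos rfl, if_neg h2]
        refine ⟨?_, ?_, ?_, ?_, ?_⟩
        · simp [hwho]
        · simp [ihlen]
        · intro n hn
          simp at hn
          rcases hn with rfl | hn
          · intro i bl h
            rw [hn1] at h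
            cases h
            rw [hk']; omega
          · intro i bl h
            have := ihold n hn i bl h
            rw [hk']; omega
        · simp only [List.singleton_append]
          rw [hrest]
          refine Chain.cons ?_ ?_ ?_
          · rw [hedge]
            exact Or.inr (Or.inl ⟨rfl, rfl⟩)
          · intro b hb
            rw [hedge] at hb
            rcases hb with hb | ⟨-, rfl⟩ | ⟨heq, -⟩
            · exact absurd hb (hno1 b)
            · rfl
            · exact absurd heq hn12
          · rw [← hrest]; exact hliftchain
        · simp only [List.map_append, List.singleton_append, List.map_cons]
          rw [hliftmap, ihmap]
          have : dterm (prefixApply E ((ρ, ρ2, op, ms) : CLabel R O M)) n1 =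
              (true, some (Sum.inl (op, ms))) := by
            simp [dterm, hmsg, hn1]
          rw [this]
          simp
      · by_cases h2 : ρ = ρ2
        · subst h2
          rw [hstrand, hproj, if_neg h1, if_pos rfl, if_neg h1, if_pos rfl]
          refine ⟨?_, ?_, ?_, ?_, ?_⟩
          · simp [hwho, h1]
          · simp [ihlen]
          · intro n hn
            simp at hn
            rcases hn with rfl | hn
            · intro i bl h
              rw [hn2] at h
              cases h
              rw [hk']; omega
            · intro i bl h
              have := ihold n hn i bl h
              rw [hk']; omega
          · simp only [List.singleton_append]
            rw [hrest]
            refine Chain.cons ?_ ?_ ?_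
            · rw [hedge]
              exact Or.inr (Or.inr ⟨rfl, rfl⟩)
            · intro b hb
              rw [hedge] at hb
              rcases hb with hb | ⟨heq, -⟩ | ⟨-, rfl⟩
              · exact absurd hb (hno2 b)
              · exact absurd heq.symm hn12
              · rfl
            · rw [← hrest]; exact hliftchain
          · simp only [List.map_append, List.singleton_append, List.map_cons]
            rw [hliftmap, ihmap]
            have : dterm (prefixApply E ((ρ1, ρ, op, ms) : CLabel R O M)) n2 =
                (false, some (Sum.inl (op, ms))) := by
              simp [dterm, hmsg, hn2]
            rw [this]
            simp
        · rw [hstrand, hproj, if_neg h1, if_neg h2, if_neg h1, if_neg h2]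
          refine ⟨?_, ?_, ?_, ?_, ?_⟩
          · simp [hwho, h1, h2, ihhead]
          · simp [ihlen]
          · intro n hn
            simp at hn
            intro i bl h
            have := ihold n hn i bl h
            rw [hk']; omega
          · simpa using hliftchain
          · simp only [List.nil_append, List.map_nil]
            rw [hliftmap, ihmap]

/-- For every `(B, who) ∈ ⟦C⟧` and every role `ρ`, the sequence of directed
terms along the strand `who ρ` in `B` is exactly the projection of the
corresponding maximal trace of `C` onto `ρ`, followed by the terminal event
`e^ρ`. -/
theorem absSem_strand_is_projection [DecidableEq R] (C : Chor R O M)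
    (hC : NoEmptySum C) (hd : DistinctRoles C)
    (E : AEnv R O M) (hE : E ∈ absSem C) :
    ∃ tr, MaxTrace C tr ∧ ∀ ρ : R,
      (follow E.edgeS (projTrace ρ tr).length (E.who ρ)).map (dterm E) =
        (projTrace (R := R) (O := O) (M := M) ρ tr).map
            (fun p => (p.1, some p.2)) ++
          [(true, some (Sum.inr ρ))] := by
  obtain ⟨tr, htr, rfl⟩ := exists_trace C E hE
  refine ⟨tr, htr, fun ρ => ?_⟩
  obtain ⟨-, -, ihS⟩ := buildEnv_inv tr (trace_distinct htr hd)
  obtain ⟨ihhead, ihlen, -, ihchain, ihmap⟩ := ihS ρ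
  have hlen : (projTrace (R := R) (O := O) (M := M) ρ tr).length =
      (strandNodes ρ tr).length - 1 := by omega
  rw [hlen, follow_eq_of_chain ihchain ihhead, ihmap]
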